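/- Let r ≥ 2 and h > 1 be real. There exists a linear recurrence sequence (u_n) of order r over C such that u_n ≠ 0 for all n, |u_n| ≥ c_1 h^n for infinitely many n (for some c_1 > 0), and |u_n| ≤ c_2 h^{-n} for infinitely many n (for some c_2 > 0). -/

import Mathlib

open Finset Polynomial Complex

namespace LRSaux
noncomputable section

def a (M : ℕ) : ℕ → ℕ
  | 0 => 1
  | k+1 => a M k + 2 ^ (a M k) * M + 6

lemma a_succ (M k : ℕ) : a M (k+1) = a M k + 2 ^ (a M k) * M + 6 := rfl

lemma a_lt_succ (M k : ℕ) : a M k < a M (k+1) := by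
  rw [a_succ]; omega

lemma a_mono (M : ℕ) : StrictMono (a M) := strictMono_nat_of_lt_succ (a_lt_succ M)

lemma a_ge (M k : ℕ) : k + 1 ≤ a M k := by
  induction k with
  | zero => simp [a]
  | succ n ih => have := a_lt_succ M n; omega

def f (M j : ℕ) : ℝ := (2:ℝ)⁻¹ ^ (a M j)

lemma f_pos (M j : ℕ) : 0 < f M j := by rw [f]; positivity

lemma f_summable (M : ℕ) : Summable (f M) := by
  apply Summable.of_nonneg_of_le (fun j => (f_pos M j).le) (fun j => ?_)
    (summable_geometric_of_lt_one (by norm_num) (by norm_num : (2:ℝ)⁻¹ < 1))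
  exact pow_le_pow_of_le_one (by norm_num) (by norm_num) (by have := a_ge M j; omega)

def x (M : ℕ) : ℝ := ∑' j, f M j

def tail (M k : ℕ) : ℝ := ∑' j, f M (j + (k+1))

lemma x_eq (M k : ℕ) : x M = ∑ j ∈ range (k+1), f M j + tail M k :=
  (Summable.sum_add_tsum_nat_add (k+1) (f_summable M)).symm

lemma tail_pos (M k : ℕ) : 0 < tail M k :=
  Summable.tsum_pos ((f_summable M).comp_injective (add_left_injective (k+1))) (fun j => (f_pos M _).le) 0 (f_pos M _)

lemma tail_le (M k : ℕ) : tail M k ≤ 2 * (2:ℝ)⁻¹ ^ (a M (k+1)) := by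
  have h1 : ∀ j : ℕ, f M (j + (k+1)) ≤ (2:ℝ)⁻¹ ^ (a M (k+1)) * (2:ℝ)⁻¹ ^ j := by
    intro j
    rw [← pow_add]
    apply pow_le_pow_of_le_one (by norm_num) (by norm_num)
    have : a M (k+1) + j ≤ a M (j + (k+1)) := by
      induction j with
      | zero => simp
      | succ n ih =>
          have e : n + 1 + (k+1) = (n + (k+1)) + 1 := by omega
          rw [e]
          have := a_lt_succ M (n + (k+1)); omega
    omega
  calc tail M k ≤ ∑' j : ℕ, (2:ℝ)⁻¹ ^ (a M (k+1)) * (2:ℝ)⁻¹ ^ j := by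
        apply Summable.tsum_le_tsum h1 ((f_summable M).comp_injective (add_left_injective (k+1)))
        exact (summable_geometric_of_lt_one (by norm_num) (by norm_num)).mul_left _
    _ = (2:ℝ)⁻¹ ^ (a M (k+1)) * 2 := by
        rw [tsum_mul_left]
        congr 1
        simpa [one_div] using tsum_geometric_two
    _ = 2 * (2:ℝ)⁻¹ ^ (a M (k+1)) := by ring

def m (M k : ℕ) : ℕ := ∑ j ∈ range (k+1), 2 ^ (a M k - a M j)

lemma m_eq (M k : ℕ) : (m M k : ℝ) = 2 ^ (a M k) * ∑ j ∈ range (k+1), f M j := by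
  rw [Finset.mul_sum, m, Nat.cast_sum]
  apply Finset.sum_congr rfl
  intro j hj
  have hle : a M j ≤ a M k := (a_mono M).monotone (by simpa using Nat.lt_succ_iff.mp (mem_range.mp hj))
  have : (2:ℝ) ^ (a M k - a M j) * 2 ^ (a M j) = 2 ^ (a M k) := by
    rw [← pow_add, Nat.sub_add_cancel hle]
  push_cast
  rw [f, inv_pow]
  field_simp
  linarith [this]

def τ (M k : ℕ) : ℝ := 2 ^ (a M k) * tail M k

lemma key (M k : ℕ) : 2 ^ (a M k) * x M = m M k + τ M k := by
  rw [x_eq M k, mul_add, m_eq, τ]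

lemma τ_pos (M k : ℕ) : 0 < τ M k :=
  mul_pos (by positivity) (tail_pos M k)

lemma τ_le (M k : ℕ) : τ M k ≤ (2:ℝ)⁻¹ ^ (2 ^ (a M k) * M + 5) := by
  have h1 := tail_le M k
  have h2 : τ M k ≤ 2 ^ (a M k) * (2 * (2:ℝ)⁻¹ ^ (a M (k+1))) := by
    rw [τ]
    apply mul_le_mul_of_nonneg_left h1 (by positivity)
  refine h2.trans (le_of_eq ?_)
  rw [a_succ]
  have : (2:ℝ)⁻¹ ^ (a M k + 2 ^ (a M k) * M + 6) = (2:ℝ)⁻¹ ^ (a M k) * (2:ℝ)⁻¹ ^ (2 ^ (a M k) * M + 5) * 2⁻¹ := by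
    rw [show a M k + 2 ^ (a M k) * M + 6 = a M k + (2 ^ (a M k) * M + 5) + 1 by omega, pow_add, pow_add, pow_one]
  rw [this]
  have h4 : (2:ℝ) ^ (a M k) * (2:ℝ)⁻¹ ^ (a M k) = 1 := by
    rw [inv_pow, mul_inv_cancel₀ (by positivity)]
  calc (2:ℝ) ^ (a M k) * (2 * ((2:ℝ)⁻¹ ^ (a M k) * (2:ℝ)⁻¹ ^ (2 ^ (a M k) * M + 5) * 2⁻¹))
      = ((2:ℝ) ^ (a M k) * (2:ℝ)⁻¹ ^ (a M k)) * (2:ℝ)⁻¹ ^ (2 ^ (a M k) * M + 5) := by ring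
    _ = (2:ℝ)⁻¹ ^ (2 ^ (a M k) * M + 5) := by rw [h4, one_mul]

lemma not_int (M : ℕ) (hM : 1 ≤ M) (n : ℕ) (hn : 1 ≤ n) (q : ℤ) : (n:ℝ) * x M ≠ q := by
  intro heq
  -- choose K := n
  set K := n with hK
  have hτle := τ_le M K
  have hτpos := τ_pos M K
  have hbig : (n:ℝ) * τ M K < 1 := by
    have h2 : (n:ℝ) * τ M K ≤ n * (2:ℝ)⁻¹ ^ (2 ^ (a M K) * M + 5) :=
      mul_le_mul_of_nonneg_left hτle (by positivity)
    have h3 : (n:ℝ) < 2 ^ (2 ^ (a M K) * M + 5) := by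
      have hn2 : n < 2 ^ (2 ^ (a M K) * M + 5) := by
        calc n < 2 ^ n := Nat.lt_two_pow_self
          _ ≤ 2 ^ (2 ^ (a M K) * M + 5) := by
            apply Nat.pow_le_pow_right (by norm_num)
            have h5 : n + 1 ≤ a M K := a_ge M n
            have h6 : a M K ≤ 2 ^ (a M K) := Nat.lt_two_pow_self |>.le
            nlinarith
      exact_mod_cast hn2
    have h4 : (n:ℝ) * (2:ℝ)⁻¹ ^ (2 ^ (a M K) * M + 5) < 1 := by
      rw [inv_pow]
      rw [mul_inv_lt_iff₀ (by positivity), one_mul]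
      exact h3
    linarith
  have hIpos : (0:ℝ) < (n:ℝ) * τ M K := by positivity
  -- n * 2^(a M K) * x = n*(m + τ)
  have h7 : (n:ℝ) * (2 ^ (a M K) * x M) = n * m M K + n * τ M K := by
    rw [key]; ring
  have h8 : (n:ℝ) * τ M K = (q * 2 ^ (a M K) - n * m M K : ℤ) := by
    push_cast
    have : (n:ℝ) * (2 ^ (a M K) * x M) = q * 2 ^ (a M K) := by
      rw [show (2:ℝ) ^ (a M K) * x M = x M * 2 ^ (a M K) by ring, ← mul_assoc, heq]
    linarith [h7, this]
  rw [h8] at hIpos hbig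
  have : (0:ℤ) < q * 2 ^ (a M K) - n * m M K := by exact_mod_cast hIpos
  have : (q * 2 ^ (a M K) - n * m M K : ℤ) < 1 := by exact_mod_cast hbig
  omega

lemma x_lb (M : ℕ) : 1/2 ≤ x M := by
  have := x_eq M 0
  have ht := tail_pos M 0
  have : x M = f M 0 + tail M 0 := by simpa using this
  rw [this]
  have : f M 0 = 1/2 := by simp [f, a]
  linarith

lemma x_ub (M : ℕ) (hM : 1 ≤ M) : x M ≤ 1/2 + 1/256 := by
  have hx := x_eq M 0
  have ht := tail_le M 0
  have hf : f M 0 = 1/2 := by simp [f, a]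
  have ha1 : 9 ≤ a M 1 := by
    have : a M 1 = 1 + 2 * M + 6 := by simp [a_succ, a]
    omega
  have h2 : (2:ℝ)⁻¹ ^ (a M 1) ≤ (2:ℝ)⁻¹ ^ 9 :=
    pow_le_pow_of_le_one (by norm_num) (by norm_num) ha1
  have : x M = f M 0 + tail M 0 := by simpa using hx
  rw [this, hf]
  have : tail M 0 ≤ 2 * (2:ℝ)⁻¹ ^ 9 := le_trans ht (by linarith)
  norm_num at this ⊢
  linarith


lemma exp_pow (t : ℝ) (n : ℕ) : (Complex.exp ((t:ℂ) * I)) ^ n = Complex.exp (((n * t : ℝ):ℂ) * I) := by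
  rw [← Complex.exp_nat_mul]
  push_cast
  ring_nf

lemma exp_shift (q : ℕ) (t : ℝ) :
    Complex.exp (((2 * Real.pi * (q + t) : ℝ):ℂ) * I) = Complex.exp (((2 * Real.pi * t : ℝ):ℂ) * I) := by
  have : ((2 * Real.pi * (q + t) : ℝ):ℂ) * I = (q:ℤ) * (2 * Real.pi * I) + ((2 * Real.pi * t : ℝ):ℂ) * I := by
    push_cast; ring
  rw [this, Complex.exp_add, Complex.exp_int_mul_two_pi_mul_I, one_mul]

lemma exp_sub_one_norm_le (t : ℝ) (ht : |t| ≤ 1) :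
    ‖Complex.exp ((t:ℂ) * I) - 1‖ ≤ 2 * |t| := by
  have h1 : ‖(t:ℂ) * I‖ ≤ 1 := by
    rw [norm_mul, Complex.norm_I, mul_one, Complex.norm_real, Real.norm_eq_abs]; exact ht
  have := Complex.norm_exp_sub_one_le h1
  rwa [norm_mul, Complex.norm_I, mul_one, Complex.norm_real, Real.norm_eq_abs] at this

lemma exp_one_sub_norm_ge (t : ℝ) (h1 : Real.pi ≤ t) (h2 : t ≤ Real.pi + Real.pi / 2) :
    1 ≤ ‖Complex.exp ((t:ℂ) * I) - 1‖ := by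
  have hcos : Real.cos t ≤ 0 :=
    Real.cos_nonpos_of_pi_div_two_le_of_le (by linarith [Real.pi_pos]) (by linarith)
  have hre : (Complex.exp ((t:ℂ) * I) - 1).re = Real.cos t - 1 := by
    simp [Complex.sub_re, Complex.exp_ofReal_mul_I_re]
  have := Complex.abs_re_le_norm (Complex.exp ((t:ℂ) * I) - 1)
  rw [hre] at this
  have : |Real.cos t - 1| = 1 - Real.cos t := by
    rw [abs_of_nonpos (by linarith)]; ring
  calc (1:ℝ) ≤ 1 - Real.cos t := by linarith
    _ = |Real.cos t - 1| := this.symm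
    _ ≤ _ := by rw [← hre]; exact Complex.abs_re_le_norm _

lemma poly_eq (S : Finset ℂ) (r : ℕ) (hS : S.card = r) :
    Polynomial.X ^ r + ∑ i ∈ Finset.range r,
      Polynomial.C ((∏ z ∈ S, (Polynomial.X - Polynomial.C z)).coeff i) * Polynomial.X ^ i
      = ∏ z ∈ S, (Polynomial.X - Polynomial.C z) := by
  set P : Polynomial ℂ := ∏ z ∈ S, (Polynomial.X - Polynomial.C z) with hP
  have hmonic : P.Monic := monic_prod_of_monic _ _ (fun z _ => monic_X_sub_C z)
  have hdeg : P.natDegree = r := by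
    rw [hP, natDegree_prod _ _ (fun z _ => X_sub_C_ne_zero z)]
    simp [hS]
  have hsum := P.as_sum_range' (r+1) (by omega)
  rw [Finset.sum_range_succ] at hsum
  have htop : (Polynomial.monomial r) (P.coeff r) = Polynomial.X ^ r := by
    have : P.coeff r = 1 := by
      have := hmonic.leadingCoeff
      rwa [Polynomial.leadingCoeff, hdeg] at this
    rw [this, ← Polynomial.C_mul_X_pow_eq_monomial, map_one, one_mul]
  conv_rhs => rw [hsum, htop]
  rw [add_comm]
  congr 1
  apply Finset.sum_congr rfl
  intro i _
  rw [← Polynomial.C_mul_X_pow_eq_monomial]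

lemma eval_root (S : Finset ℂ) (z : ℂ) (hz : z ∈ S) :
    (∏ w ∈ S, (Polynomial.X - Polynomial.C w)).eval z = 0 := by
  rw [Polynomial.eval_prod]
  exact Finset.prod_eq_zero hz (by simp)

lemma eval_expand (A : ℕ → ℂ) (r : ℕ) (z : ℂ)
    (hz : (Polynomial.X ^ r + ∑ i ∈ Finset.range r,
      Polynomial.C (A i) * Polynomial.X ^ i).eval z = 0) :
    z ^ r + ∑ i ∈ Finset.range r, A i * z ^ i = 0 := by
  rw [Polynomial.eval_add, Polynomial.eval_pow, Polynomial.eval_X,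
    Polynomial.eval_finset_sum] at hz
  simpa using hz

end
end LRSaux

open Finset Polynomial

set_option maxHeartbeats 1600000 in
theorem lrs_with_large_fluctuation
    (r : ℕ) (hr : 2 ≤ r) (h : ℝ) (hh : 1 < h) :
    ∃ (A : ℕ → ℂ) (u : ℕ → ℂ),
      A 0 ≠ 0 ∧
      (∃ S : Finset ℂ, S.card = r ∧ ∀ z ∈ S,
        (Polynomial.X ^ r + ∑ i ∈ Finset.range r,
          Polynomial.C (A i) * Polynomial.X ^ i).eval z = 0) ∧
      (∀ n : ℕ, u (n + r) + ∑ i ∈ Finset.range r, A i * u (n + i) = 0) ∧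
      (∀ n : ℕ, u n ≠ 0) ∧
      (∃ c₁ : ℝ, 0 < c₁ ∧ {n : ℕ | c₁ * h ^ n ≤ ‖u n‖}.Infinite) ∧
      (∃ c₂ : ℝ, 0 < c₂ ∧ {n : ℕ | ‖u n‖ ≤ c₂ * (h ^ n)⁻¹}.Infinite) := by
  -- basic constants
  set D : ℝ := h + r with hDdef
  have hDr : (r:ℝ) < D := by simp [hDdef]; linarith
  have hD1 : 1 < D := by
    have : (2:ℝ) ≤ (r:ℝ) := by exact_mod_cast hr
    linarith
  have hDpos : 0 < D := by linarith
  have hDh : h ≤ D := by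
    have : (0:ℝ) ≤ (r:ℝ) := Nat.cast_nonneg r
    linarith
  have hhDpos : 0 < h * D := by positivity
  have hhD1 : 1 ≤ h * D := by nlinarith
  obtain ⟨M, hM2pow, hM1⟩ : ∃ M : ℕ, h * D ≤ 2 ^ M ∧ 1 ≤ M := by
    obtain ⟨M, hM⟩ := pow_unbounded_of_one_lt (h * D) (by norm_num : (1:ℝ) < 2)
    exact ⟨M + 1, le_trans hM.le (by apply pow_le_pow_right₀ <;> norm_num), by omega⟩
  set x : ℝ := LRSaux.x M with hxdef
  have hxlb : 1/2 ≤ x := LRSaux.x_lb M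
  have hxub : x ≤ 1/2 + 1/256 := LRSaux.x_ub M hM1
  set η : ℂ := Complex.exp (((2 * Real.pi * x : ℝ) : ℂ) * Complex.I) with hηdef
  have hηnorm : ‖η‖ = 1 := by
    rw [hηdef, Complex.norm_exp_ofReal_mul_I]
  -- powers of η
  have hηpow : ∀ N : ℕ, η ^ N = Complex.exp (((2 * Real.pi * (N * x) : ℝ) : ℂ) * Complex.I) := by
    intro N
    rw [hηdef, LRSaux.exp_pow]
    norm_num
    ring_nf
  have hπpos := Real.pi_pos
  -- η^N ≠ 1 for N ≥ 1
  have hne1 : ∀ N : ℕ, 1 ≤ N → η ^ N ≠ 1 := by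
    intro N hN heq
    rw [hηpow N, Complex.exp_eq_one_iff] at heq
    obtain ⟨q, hq⟩ := heq
    have him := congrArg Complex.im hq
    simp [Complex.mul_im] at him
    have : (N:ℝ) * x = q := by
      have h2 : (N:ℝ) * x * (2 * Real.pi) = (q:ℝ) * (2 * Real.pi) := by linarith
      exact mul_right_cancel₀ (by positivity) h2
    exact LRSaux.not_int M hM1 N hN q this
  have hη1 : η ≠ 1 := by have := hne1 1 le_rfl; simpa using this
  -- the special powers
  have hkey : ∀ k : ℕ, η ^ (2 ^ (LRSaux.a M k)) =
      Complex.exp (((2 * Real.pi * (LRSaux.τ M k) : ℝ) : ℂ) * Complex.I) := by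
    intro k
    rw [hηpow]
    have h1 : ((2 ^ (LRSaux.a M k) : ℕ) : ℝ) * x = (LRSaux.m M k : ℝ) + LRSaux.τ M k := by
      push_cast
      rw [← LRSaux.key M k, hxdef]
    rw [h1]
    exact LRSaux.exp_shift (LRSaux.m M k) (LRSaux.τ M k)
  have hτpos : ∀ k, 0 < LRSaux.τ M k := LRSaux.τ_pos M
  have hτ128 : ∀ k, LRSaux.τ M k ≤ 1 / 128 := by
    intro k
    refine (LRSaux.τ_le M k).trans ?_
    have h7 : 7 ≤ 2 ^ (LRSaux.a M k) * M + 5 := by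
      have h1 : 1 ≤ LRSaux.a M k := by have := LRSaux.a_ge M k; omega
      have h2 : 2 ≤ 2 ^ (LRSaux.a M k) := by
        calc 2 = 2^1 := rfl
          _ ≤ 2 ^ (LRSaux.a M k) := Nat.pow_le_pow_right (by norm_num) h1
      nlinarith
    calc (2:ℝ)⁻¹ ^ (2 ^ (LRSaux.a M k) * M + 5) ≤ (2:ℝ)⁻¹ ^ 7 :=
          pow_le_pow_of_le_one (by norm_num) (by norm_num) h7
      _ = 1/128 := by norm_num
  -- small norm bound on the special powers
  have hsmall : ∀ k : ℕ, ‖η ^ (2 ^ (LRSaux.a M k)) - 1‖ ≤ 4 * Real.pi * LRSaux.τ M k := by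
    intro k
    rw [hkey k]
    have ht : |2 * Real.pi * LRSaux.τ M k| ≤ 1 := by
      rw [abs_of_pos (by nlinarith [hτpos k, hπpos])]
      have := hτ128 k
      have := Real.pi_le_four
      nlinarith [hτpos k]
    have := LRSaux.exp_sub_one_norm_le (2 * Real.pi * LRSaux.τ M k) ht
    rw [abs_of_pos (by nlinarith [hτpos k, hπpos])] at this
    linarith
  have hsmall' : ∀ k : ℕ, ‖η ^ (2 ^ (LRSaux.a M k)) - 1‖ ≤ 1/2 := by
    intro k
    refine (hsmall k).trans ?_
    have := hτ128 k
    have := Real.pi_le_four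
    nlinarith [hτpos k]
  -- ‖η - 1‖ ≥ 1
  have hbigη : 1 ≤ ‖η - 1‖ := by
    rw [hηdef]
    apply LRSaux.exp_one_sub_norm_ge
    · nlinarith
    · nlinarith
  -- the sequence u
  set u : ℕ → ℂ := fun n => ((D:ℂ)) ^ n * (η ^ (n+1) - 1) with hudef
  have hunorm : ∀ n : ℕ, ‖u n‖ = D ^ n * ‖η ^ (n+1) - 1‖ := by
    intro n
    rw [hudef]
    simp only [norm_mul, norm_pow, Complex.norm_real, Real.norm_eq_abs,
      abs_of_pos hDpos]
  have huD : ∀ m : ℕ, u m = η * ((D:ℂ) * η) ^ m - ((D:ℂ)) ^ m := by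
    intro m
    rw [hudef]
    simp only
    rw [mul_pow]
    ring
  -- the finset of roots
  set T : Finset ℂ := (Finset.range (r-2)).image (fun j : ℕ => ((j+1 : ℕ) : ℂ)) with hTdef
  have hTnorm : ∀ w ∈ T, ‖w‖ < D := by
    intro w hw
    rw [hTdef, Finset.mem_image] at hw
    obtain ⟨j, hj, rfl⟩ := hw
    rw [Complex.norm_natCast]
    have : j + 1 ≤ r := by have := Finset.mem_range.mp hj; omega
    have : ((j+1 : ℕ) : ℝ) ≤ (r : ℝ) := by exact_mod_cast this
    linarith
  have hDC : ‖((D:ℝ):ℂ)‖ = D := by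
    rw [Complex.norm_real, Real.norm_eq_abs, abs_of_pos hDpos]
  have hDηnorm : ‖((D:ℝ):ℂ) * η‖ = D := by rw [norm_mul, hDC, hηnorm, mul_one]
  have hDT : ((D:ℝ):ℂ) ∉ T := fun hmem => absurd (hTnorm _ hmem) (by rw [hDC]; exact lt_irrefl D)
  have hDηT : ((D:ℝ):ℂ) * η ∉ T := fun hmem => absurd (hTnorm _ hmem) (by rw [hDηnorm]; exact lt_irrefl D)
  have hDηD : ((D:ℝ):ℂ) * η ≠ ((D:ℝ):ℂ) := by
    intro heq
    apply hη1
    have hD0 : ((D:ℝ):ℂ) ≠ 0 := by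
      simpa using ne_of_gt hDpos
    field_simp at heq
    tauto
  set S : Finset ℂ := insert (((D:ℝ):ℂ) * η) (insert ((D:ℝ):ℂ) T) with hSdef
  have hTcard : T.card = r - 2 := by
    rw [hTdef, Finset.card_image_of_injective _ (fun a b hab => by
      have : (a+1 : ℕ) = (b+1 : ℕ) := Nat.cast_injective hab
      omega), Finset.card_range]
  have hScard : S.card = r := by
    rw [hSdef, Finset.card_insert_of_notMem (by
      simp only [Finset.mem_insert]
      push_neg
      exact ⟨hDηD, hDηT⟩), Finset.card_insert_of_notMem hDT, hTcard]
    omega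
  have h0S : (0:ℂ) ∉ S := by
    intro h0
    rw [hSdef] at h0
    rcases Finset.mem_insert.mp h0 with h0 | h0
    · rw [← h0] at hDηnorm; simp at hDηnorm; linarith
    rcases Finset.mem_insert.mp h0 with h0 | h0
    · rw [← h0] at hDC; simp at hDC; linarith
    · rw [hTdef, Finset.mem_image] at h0
      obtain ⟨j, _, hj⟩ := h0
      have : (j+1 : ℕ) = 0 := by exact_mod_cast hj
      omega
  -- A
  set P : Polynomial ℂ := ∏ z ∈ S, (Polynomial.X - Polynomial.C z) with hPdef
  set A : ℕ → ℂ := fun i => P.coeff i with hAdef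
  have hpoly : Polynomial.X ^ r + ∑ i ∈ Finset.range r,
      Polynomial.C (A i) * Polynomial.X ^ i = P := LRSaux.poly_eq S r hScard
  have hroots : ∀ z ∈ S, (Polynomial.X ^ r + ∑ i ∈ Finset.range r,
      Polynomial.C (A i) * Polynomial.X ^ i).eval z = 0 := by
    intro z hz
    rw [hpoly]
    exact LRSaux.eval_root S z hz
  refine ⟨A, u, ?_, ⟨S, hScard, hroots⟩, ?_, ?_, ?_, ?_⟩
  · -- A 0 ≠ 0
    rw [hAdef]
    simp only
    rw [Polynomial.coeff_zero_eq_eval_zero, hPdef, Polynomial.eval_prod]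
    rw [Finset.prod_ne_zero_iff]
    intro z hz
    simp only [Polynomial.eval_sub, Polynomial.eval_X, Polynomial.eval_C, zero_sub, neg_ne_zero]
    intro hz0
    rw [hz0] at hz
    exact h0S hz
  · -- recurrence
    intro n
    have hz2 : ((D:ℝ):ℂ) * η ∈ S := Finset.mem_insert_self _ _
    have hz1 : ((D:ℝ):ℂ) ∈ S := by
      rw [hSdef]
      exact Finset.mem_insert_of_mem (Finset.mem_insert_self _ _)
    have e2 := LRSaux.eval_expand A r _ (hroots _ hz2)
    have e1 := LRSaux.eval_expand A r _ (hroots _ hz1)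
    have hsum : ∑ i ∈ Finset.range r, A i * u (n + i) =
        η * (((D:ℝ):ℂ) * η) ^ n * (∑ i ∈ Finset.range r, A i * (((D:ℝ):ℂ) * η) ^ i)
        - ((D:ℝ):ℂ) ^ n * (∑ i ∈ Finset.range r, A i * ((D:ℝ):ℂ) ^ i) := by
      rw [Finset.mul_sum, Finset.mul_sum, ← Finset.sum_sub_distrib]
      apply Finset.sum_congr rfl
      intro i _
      rw [huD]
      ring
    rw [hsum, huD (n + r)]
    linear_combination (η * (((D:ℝ):ℂ) * η) ^ n) * e2 - ((D:ℝ):ℂ) ^ n * e1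
  · -- nonvanishing
    intro n
    rw [hudef]
    simp only
    apply mul_ne_zero
    · apply pow_ne_zero
      simpa using ne_of_gt hDpos
    · exact sub_ne_zero.mpr (hne1 (n+1) (by omega))
  · -- large values
    refine ⟨1/2, by norm_num, ?_⟩
    apply Set.infinite_of_injective_forall_mem
      (f := fun k : ℕ => 2 ^ (LRSaux.a M k))
    · intro i j hij
      change 2 ^ (LRSaux.a M i) = 2 ^ (LRSaux.a M j) at hij
      by_contra hne
      rcases Nat.lt_or_ge i j with hlt | hge
      · have := Nat.pow_lt_pow_right (by norm_num : 1 < 2) (LRSaux.a_mono M hlt)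
        omega
      · have hlt : j < i := by omega
        have := Nat.pow_lt_pow_right (by norm_num : 1 < 2) (LRSaux.a_mono M hlt)
        omega
    · intro k
      simp only [Set.mem_setOf_eq]
      set n : ℕ := 2 ^ (LRSaux.a M k) with hndef
      rw [hunorm]
      have hpow : η ^ (n + 1) = η ^ n * η := pow_succ η n
      have hd : ‖η - η ^ n * η‖ ≤ 1/2 := by
        have : η - η ^ n * η = η * (1 - η ^ n) := by ring
        rw [this, norm_mul, hηnorm, one_mul, norm_sub_rev]
        exact hsmall' k
      have htri : ‖η - 1‖ ≤ ‖η - η ^ n * η‖ + ‖η ^ n * η - 1‖ := by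
        calc ‖η - 1‖ = ‖(η - η ^ n * η) + (η ^ n * η - 1)‖ := by ring_nf
          _ ≤ _ := norm_add_le _ _
      have h12 : 1/2 ≤ ‖η ^ (n+1) - 1‖ := by
        rw [hpow]
        linarith
      have hDn : h ^ n ≤ D ^ n := pow_le_pow_left₀ (by linarith) hDh n
      calc (1:ℝ)/2 * h ^ n ≤ 1/2 * D ^ n := by
            apply mul_le_mul_of_nonneg_left hDn (by norm_num)
        _ = D ^ n * (1/2) := by ring
        _ ≤ D ^ n * ‖η ^ (n+1) - 1‖ :=
            mul_le_mul_of_nonneg_left h12 (pow_nonneg hDpos.le n)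
  · -- small values
    refine ⟨1, one_pos, ?_⟩
    have h2le : ∀ k, 2 ≤ 2 ^ (LRSaux.a M k) := by
      intro k
      calc 2 = 2^1 := rfl
        _ ≤ 2 ^ (LRSaux.a M k) := Nat.pow_le_pow_right (by norm_num)
            (by have := LRSaux.a_ge M k; omega)
    apply Set.infinite_of_injective_forall_mem
      (f := fun k : ℕ => 2 ^ (LRSaux.a M k) - 1)
    · intro i j hij
      change 2 ^ (LRSaux.a M i) - 1 = 2 ^ (LRSaux.a M j) - 1 at hij
      by_contra hne
      rcases Nat.lt_or_ge i j with hlt | hge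
      · have := Nat.pow_lt_pow_right (by norm_num : 1 < 2) (LRSaux.a_mono M hlt)
        have := h2le i; omega
      · have hlt : j < i := by omega
        have := Nat.pow_lt_pow_right (by norm_num : 1 < 2) (LRSaux.a_mono M hlt)
        have := h2le j; omega
    · intro k
      simp only [Set.mem_setOf_eq, one_mul]
      set n : ℕ := 2 ^ (LRSaux.a M k) - 1 with hndef
      have hn1 : n + 1 = 2 ^ (LRSaux.a M k) := by
        have := h2le k; omega
      rw [hunorm, hn1]
      -- ‖η^(2^a) - 1‖ ≤ 4πτ ≤ ((h*D)^(n+1))⁻¹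
      have hb1 : ‖η ^ 2 ^ (LRSaux.a M k) - 1‖ ≤ ((h*D) ^ (n+1))⁻¹ := by
        refine (hsmall k).trans ?_
        have hτb := LRSaux.τ_le M k
        have hπ16 : 4 * Real.pi ≤ 16 := by linarith [Real.pi_le_four]
        have hc1 : 4 * Real.pi * LRSaux.τ M k ≤
            16 * (2:ℝ)⁻¹ ^ (2 ^ (LRSaux.a M k) * M + 5) := by
          calc 4 * Real.pi * LRSaux.τ M k ≤ 16 * LRSaux.τ M k :=
                mul_le_mul_of_nonneg_right hπ16 (hτpos k).le
            _ ≤ 16 * (2:ℝ)⁻¹ ^ (2 ^ (LRSaux.a M k) * M + 5) := by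
                have := LRSaux.τ_le M k
                linarith
        have hc2 : (16:ℝ) * (2:ℝ)⁻¹ ^ (2 ^ (LRSaux.a M k) * M + 5) =
            (1/2) * ((2:ℝ)⁻¹ ^ M) ^ (2 ^ (LRSaux.a M k)) := by
          rw [pow_add, mul_comm (2 ^ (LRSaux.a M k)) M, pow_mul]
          ring
        have hc3 : ((2:ℝ)⁻¹ ^ M) ≤ (h*D)⁻¹ := by
          rw [inv_pow]
          exact inv_anti₀ hhDpos hM2pow
        have hc4 : (((2:ℝ)⁻¹ ^ M)) ^ (2 ^ (LRSaux.a M k)) ≤ ((h*D)⁻¹) ^ (2 ^ (LRSaux.a M k)) :=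
          pow_le_pow_left₀ (by positivity) hc3 _
        have hc5 : ((h*D)⁻¹ : ℝ) ^ (2 ^ (LRSaux.a M k)) = ((h*D) ^ (n+1))⁻¹ := by
          rw [inv_pow, hn1]
        have hY : (0:ℝ) < ((h*D)⁻¹) ^ (2 ^ (LRSaux.a M k)) :=
          pow_pos (by positivity) _
        linarith [hc1, hc2.le, hc4, hc5.le, hY]
      have hb2 : D ^ n * ((h*D) ^ (n+1))⁻¹ ≤ (h ^ n)⁻¹ := by
        have he : D ^ n * ((h*D) ^ (n+1))⁻¹ = 1 / (h ^ (n+1) * D) := by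
          rw [mul_pow, pow_succ D n]
          have hDn : (0:ℝ) < D ^ n := pow_pos hDpos n
          field_simp
        rw [he, one_div]
        apply inv_anti₀ (pow_pos (lt_trans zero_lt_one hh) n)
        have h1 : h ^ n ≤ h ^ (n+1) := by
          apply pow_le_pow_right₀ (by linarith) (by omega)
        nlinarith [pow_pos (lt_trans zero_lt_one hh) n, pow_pos (lt_trans zero_lt_one hh) (n+1)]
      calc D ^ n * ‖η ^ 2 ^ (LRSaux.a M k) - 1‖
          ≤ D ^ n * ((h*D) ^ (n+1))⁻¹ := by
            apply mul_le_mul_of_nonneg_left hb1 (by positivity)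
        _ ≤ (h ^ n)⁻¹ := hb2
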